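/- For every integer n ≥ 1, the infinite series Σ_{L=0}^{∞} C(2L, n−1)/2^{2L+1} converges and its sum equals (1/2)·(1 + (−1)^{n+1}/3^n). (This is the probability that the starting player wins when two players alternately toss a fair coin and the winner is the one who tosses the n-th head overall.) -/

import Mathlib

lemma hasSum_choose_full (m : ℕ) {r : ℝ} (hr : |r| < 1) :
    HasSum (fun j : ℕ => (j.choose m : ℝ) * r ^ j) (r ^ m / (1 - r) ^ (m + 1)) := by
  have hr' : ‖r‖ < 1 := by rwa [Real.norm_eq_abs]
  have h := (hasSum_choose_mul_geometric_of_norm_lt_one (𝕜 := ℝ) m hr').mul_right (r ^ m)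
  have h2 : HasSum (fun n : ℕ => (((n + m).choose m : ℝ)) * r ^ (n + m))
      (1 / (1 - r) ^ (m + 1) * r ^ m) := by
    convert h using 2 with n
    · rfl
    rw [pow_add]; ring
  have h3 := (hasSum_nat_add_iff (f := fun j : ℕ => (j.choose m : ℝ) * r ^ j) m).mp h2
  convert h3 using 1
  · rfl
  rw [Finset.sum_eq_zero, add_zero]
  · ring
  · intro i hi
    rw [Nat.choose_eq_zero_of_lt (Finset.mem_range.mp hi)]; simp

theorem coin_game_nth_head (n : ℕ) (hn : 1 ≤ n) :
    Summable (fun L : ℕ => (Nat.choose (2 * L) (n - 1) : ℝ) / 2 ^ (2 * L + 1)) ∧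
    (∑' L : ℕ, (Nat.choose (2 * L) (n - 1) : ℝ) / 2 ^ (2 * L + 1)) =
      (1 / 2) * (1 + (-1 : ℝ) ^ (n + 1) / 3 ^ n) := by
  obtain ⟨m, rfl⟩ : ∃ m, n = m + 1 := ⟨n - 1, by omega⟩
  simp only [Nat.add_sub_cancel]
  have h1 := hasSum_choose_full m (r := 1/2) (by rw [abs_of_pos] <;> norm_num)
  have h2 := hasSum_choose_full m (r := -(1/2)) (by rw [abs_neg, abs_of_pos] <;> norm_num)
  have hF := (h1.add h2).div_const 4
  set F : ℕ → ℝ := fun j => ((j.choose m : ℝ) * (1/2 : ℝ) ^ j +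
      (j.choose m : ℝ) * (-(1/2) : ℝ) ^ j) / 4 with hFdef
  have hzero : ∀ j ∉ Set.range (fun L : ℕ => 2 * L), F j = 0 := by
    intro j hj
    have hne : ¬ ∃ k, 2 * k = j := by simpa [Set.range] using hj
    have hodd : Odd j := by
      rcases Nat.even_or_odd j with ⟨k, hk⟩ | ho
      · exact absurd ⟨k, by omega⟩ hne
      · exact ho
    simp only [hFdef]
    rw [hodd.neg_pow]
    ring
  have hinj : Function.Injective (fun L : ℕ => 2 * L) := fun a b h => by simpa using h
  have hcomp := (hinj.hasSum_iff hzero).mpr hF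
  have hEq : (fun L : ℕ => F (2 * L)) =
      (fun L : ℕ => (Nat.choose (2 * L) m : ℝ) / 2 ^ (2 * L + 1)) := by
    funext L
    simp only [hFdef]
    rw [Even.neg_pow (even_two_mul L), pow_succ, one_div, inv_pow]
    field_simp
    ring
  have hcomp' : HasSum (fun L : ℕ => (Nat.choose (2 * L) m : ℝ) / 2 ^ (2 * L + 1))
      (((1/2 : ℝ) ^ m / (1 - 1/2) ^ (m + 1) + (-(1/2) : ℝ) ^ m / (1 - -(1/2)) ^ (m + 1)) / 4) := by
    rw [← hEq]
    exact hcomp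
  have hval : (((1/2 : ℝ) ^ m / (1 - 1/2) ^ (m + 1) + (-(1/2) : ℝ) ^ m / (1 - -(1/2)) ^ (m + 1)) / 4)
      = (1 / 2) * (1 + (-1 : ℝ) ^ (m + 1 + 1) / 3 ^ (m + 1)) := by
    rw [show ((1:ℝ) - 1/2) = 1/2 by norm_num, show ((1:ℝ) - -(1/2)) = 3/2 by norm_num,
      neg_pow]
    have h2 : ((2:ℝ)) ^ m ≠ 0 := by positivity
    have h2' : ((2:ℝ)) ^ (m+1) ≠ 0 := by positivity
    have h3 : ((3:ℝ)) ^ (m+1) ≠ 0 := by positivity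
    field_simp
    rw [show (3/2:ℝ) = 3 * (1/2) by norm_num, mul_pow]
    ring
  rw [hval] at hcomp'
  exact ⟨hcomp'.summable, hcomp'.tsum_eq⟩
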